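/- The operator T has a unique fixed point p* in the order interval [u0, v0]: there exists a continuous function p* : [0,1] → ℝ with u0 ≤ p* ≤ v0 pointwise such that T p* = p*, and any q in [u0, v0] with T q = q equals p*. -/

import Mathlib

open Set Filter Topology

noncomputable def Tmap (c : ℝ → ℝ) (g : ℕ → ℝ) (δ : ℝ) (p : ℝ → ℝ) (s : ℝ) : ℝ :=
  sInf {y : ℝ | ∃ k : ℕ, ∃ t : ℝ, 1 ≤ k ∧ 0 ≤ t ∧ t ≤ s ∧
    y = c (s - t) + g k + δ * k * p (t / k)}

def TS (c : ℝ → ℝ) (g : ℕ → ℝ) (δ : ℝ) (p : ℝ → ℝ) (s : ℝ) : Set ℝ :=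
  {y : ℝ | ∃ k : ℕ, ∃ t : ℝ, 1 ≤ k ∧ 0 ≤ t ∧ t ≤ s ∧
    y = c (s - t) + g k + δ * k * p (t / k)}

lemma Tmap_eq (c : ℝ → ℝ) (g : ℕ → ℝ) (δ : ℝ) (p : ℝ → ℝ) (s : ℝ) :
    Tmap c g δ p s = sInf (TS c g δ p s) := rfl

structure GoodParams (c : ℝ → ℝ) (g : ℕ → ℝ) (δ a s₀ : ℝ) : Prop where
  ha : 0 < a
  hδ : 1 < δ
  hc0 : c 0 = 0
  hcmono : MonotoneOn c (Set.Icc 0 1)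
  hccont : ContinuousOn c (Set.Icc 0 1)
  hca : ∀ x ∈ Set.Icc (0:ℝ) 1, a * x ≤ c x
  hg1 : g 1 = 0
  hg0 : ∀ k : ℕ, 1 ≤ k → 0 ≤ g k
  hs₀ : 0 < s₀
  hs₀1 : s₀ ≤ 1
  hslope : ∀ u v : ℝ, 0 ≤ u → u ≤ v → v ≤ s₀ → c v - c u ≤ δ * a * (v - u)
  hmod : ∀ u v : ℝ, 0 ≤ u → u ≤ v → v ≤ 1 → c v - c u ≤ c 1 - c (1 - (v - u))

def InInt (c : ℝ → ℝ) (a : ℝ) (p : ℝ → ℝ) : Prop :=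
  ∀ x ∈ Set.Icc (0:ℝ) 1, a * x ≤ p x ∧ p x ≤ c x

variable {c : ℝ → ℝ} {g : ℕ → ℝ} {δ a s₀ : ℝ}

lemma c_nonneg (H : GoodParams c g δ a s₀) {x : ℝ} (hx : x ∈ Set.Icc (0:ℝ) 1) : 0 ≤ c x :=
  le_trans (by nlinarith [H.ha, hx.1] : (0:ℝ) ≤ a * x) (H.hca x hx)

lemma p0_eq (H : GoodParams c g δ a s₀) {p : ℝ → ℝ} (hp : InInt c a p) : p 0 = 0 := by
  have h := hp 0 ⟨le_refl 0, zero_le_one⟩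
  rw [H.hc0] at h
  have := h.1
  have := h.2
  linarith

lemma Tdiv_mem {k : ℕ} {t s : ℝ} (hk : 1 ≤ k) (ht0 : 0 ≤ t) (hts : t ≤ s)
    (hs : s ∈ Set.Icc (0:ℝ) 1) : t / (k:ℝ) ∈ Set.Icc (0:ℝ) 1 := by
  have hk' : (1:ℝ) ≤ (k:ℝ) := by exact_mod_cast hk
  have hkpos : (0:ℝ) < k := by linarith
  exact ⟨by positivity, le_trans (div_le_self ht0 hk') (le_trans hts hs.2)⟩

lemma Tsub_mem {t s : ℝ} (ht0 : 0 ≤ t) (hts : t ≤ s) (hs : s ∈ Set.Icc (0:ℝ) 1) :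
    s - t ∈ Set.Icc (0:ℝ) 1 := ⟨by linarith [hs.1], by linarith [hs.2]⟩

lemma TS_nonempty (p : ℝ → ℝ) {s : ℝ} (hs : 0 ≤ s) : (TS c g δ p s).Nonempty :=
  ⟨c (s - 0) + g 1 + δ * (1:ℕ) * p (0 / (1:ℕ)), 1, 0, le_refl 1, le_refl 0, hs, rfl⟩

/-- Every element of the constraint set is at least `a*s`. -/
lemma TS_lb (H : GoodParams c g δ a s₀) {p : ℝ → ℝ} (hp : ∀ x ∈ Set.Icc (0:ℝ) 1, a * x ≤ p x)
    {s : ℝ} (hs : s ∈ Set.Icc (0:ℝ) 1) : ∀ y ∈ TS c g δ p s, a * s ≤ y := by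
  rintro y ⟨k, t, hk, ht0, hts, rfl⟩
  have hk' : (1:ℝ) ≤ (k:ℝ) := by exact_mod_cast hk
  have hkpos : (0:ℝ) < k := by linarith
  have h1 : a * (s - t) ≤ c (s - t) := H.hca _ (Tsub_mem ht0 hts hs)
  have h2 : a * (t / k) ≤ p (t / k) := hp _ (Tdiv_mem hk ht0 hts hs)
  have h3 : 0 ≤ g k := H.hg0 k hk
  have hδ0 : (0:ℝ) < δ := lt_trans one_pos H.hδ
  have h4 : δ * k * (a * (t / k)) ≤ δ * k * p (t / k) := by
    apply mul_le_mul_of_nonneg_left h2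
    positivity
  have h5 : δ * k * (a * (t / k)) = δ * (a * t) := by
    field_simp
  have h6 : a * t ≤ δ * (a * t) := by nlinarith [H.ha, H.hδ, mul_nonneg (le_of_lt H.ha) ht0]
  linarith

lemma TS_bdd (H : GoodParams c g δ a s₀) {p : ℝ → ℝ} (hp : ∀ x ∈ Set.Icc (0:ℝ) 1, a * x ≤ p x)
    {s : ℝ} (hs : s ∈ Set.Icc (0:ℝ) 1) : BddBelow (TS c g δ p s) :=
  ⟨a * s, fun y hy => TS_lb H hp hs y hy⟩

lemma Tmap_lb (H : GoodParams c g δ a s₀) {p : ℝ → ℝ} (hp : ∀ x ∈ Set.Icc (0:ℝ) 1, a * x ≤ p x)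
    {s : ℝ} (hs : s ∈ Set.Icc (0:ℝ) 1) : a * s ≤ Tmap c g δ p s := by
  rw [Tmap_eq]
  exact le_csInf (TS_nonempty p hs.1) (TS_lb H hp hs)

lemma Tmap_le_elt (H : GoodParams c g δ a s₀) {p : ℝ → ℝ}
    (hp : ∀ x ∈ Set.Icc (0:ℝ) 1, a * x ≤ p x) {s : ℝ} (hs : s ∈ Set.Icc (0:ℝ) 1)
    {k : ℕ} {t : ℝ} (hk : 1 ≤ k) (ht0 : 0 ≤ t) (hts : t ≤ s) :
    Tmap c g δ p s ≤ c (s - t) + g k + δ * k * p (t / k) := by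
  rw [Tmap_eq]
  exact csInf_le (TS_bdd H hp hs) ⟨k, t, hk, ht0, hts, rfl⟩

lemma Tmap_le_c (H : GoodParams c g δ a s₀) {p : ℝ → ℝ} (hp : InInt c a p)
    {s : ℝ} (hs : s ∈ Set.Icc (0:ℝ) 1) : Tmap c g δ p s ≤ c s := by
  have h := Tmap_le_elt H (fun x hx => (hp x hx).1) hs (le_refl 1) (le_refl 0) hs.1
  simpa [p0_eq H hp, H.hg1] using h

lemma InInt_Tmap (H : GoodParams c g δ a s₀) {p : ℝ → ℝ} (hp : InInt c a p) :
    InInt c a (Tmap c g δ p) := fun x hx =>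
  ⟨Tmap_lb H (fun y hy => (hp y hy).1) hx, Tmap_le_c H hp hx⟩

/-- Monotonicity of `Tmap` in `p`. -/
lemma Tmap_mono_p (H : GoodParams c g δ a s₀) {p q : ℝ → ℝ}
    (hp : ∀ x ∈ Set.Icc (0:ℝ) 1, a * x ≤ p x)
    (hpq : ∀ x ∈ Set.Icc (0:ℝ) 1, p x ≤ q x) {s : ℝ} (hs : s ∈ Set.Icc (0:ℝ) 1) :
    Tmap c g δ p s ≤ Tmap c g δ q s := by
  rw [Tmap_eq c g δ q s]
  apply le_csInf (TS_nonempty q hs.1)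
  rintro y ⟨k, t, hk, ht0, hts, rfl⟩
  have hk' : (1:ℝ) ≤ (k:ℝ) := by exact_mod_cast hk
  have h1 : p (t / k) ≤ q (t / k) := hpq _ (Tdiv_mem hk ht0 hts hs)
  calc Tmap c g δ p s ≤ c (s - t) + g k + δ * k * p (t / k) :=
        Tmap_le_elt H hp hs hk ht0 hts
    _ ≤ c (s - t) + g k + δ * k * q (t / k) := by
        have : δ * k * p (t / k) ≤ δ * k * q (t / k) := by
          apply mul_le_mul_of_nonneg_left h1
          nlinarith [H.hδ]
        linarith

/-- `Tmap` only depends on values of `p` on `[0,1]`. -/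
lemma Tmap_congr {p q : ℝ → ℝ} (hpq : ∀ x ∈ Set.Icc (0:ℝ) 1, p x = q x)
    {s : ℝ} (hs : s ∈ Set.Icc (0:ℝ) 1) : Tmap c g δ p s = Tmap c g δ q s := by
  rw [Tmap_eq, Tmap_eq]
  congr 1
  ext y
  constructor <;> rintro ⟨k, t, hk, ht0, hts, rfl⟩ <;>
    exact ⟨k, t, hk, ht0, hts, by rw [hpq _ (Tdiv_mem hk ht0 hts hs)]⟩

/-- On `[0, s₀]`, `Tmap p = c` for any `p` in the order interval. -/
lemma Tmap_small (H : GoodParams c g δ a s₀) {p : ℝ → ℝ} (hp : InInt c a p)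
    {s : ℝ} (hs0 : 0 ≤ s) (hss : s ≤ s₀) : Tmap c g δ p s = c s := by
  have hs : s ∈ Set.Icc (0:ℝ) 1 := ⟨hs0, le_trans hss H.hs₀1⟩
  apply le_antisymm (Tmap_le_c H hp hs)
  rw [Tmap_eq]
  apply le_csInf (TS_nonempty p hs0)
  rintro y ⟨k, t, hk, ht0, hts, rfl⟩
  have hk' : (1:ℝ) ≤ (k:ℝ) := by exact_mod_cast hk
  have hkpos : (0:ℝ) < k := by linarith
  have hδ0 : (0:ℝ) < δ := lt_trans one_pos H.hδ
  have h3 : 0 ≤ g k := H.hg0 k hk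
  rcases eq_or_lt_of_le ht0 with h | h
  · -- t = 0
    subst h
    have : p (0 / (k:ℝ)) = 0 := by
      rw [zero_div]; exact p0_eq H hp
    rw [this]
    simp
    linarith
  · -- t > 0
    have h2 : a * (t / k) ≤ p (t / k) := (hp _ (Tdiv_mem hk ht0 hts hs)).1
    have h4 : δ * k * (a * (t / k)) ≤ δ * k * p (t / k) := by
      apply mul_le_mul_of_nonneg_left h2
      positivity
    have h5 : δ * k * (a * (t / k)) = δ * (a * t) := by field_simp
    have h6 : c s - c (s - t) ≤ δ * a * (s - (s - t)) :=
      H.hslope (s - t) s (by linarith) (by linarith) hss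
    have : δ * a * (s - (s - t)) = δ * (a * t) := by ring
    linarith

/-- `Tmap p` is monotone on `[0,1]` when `p` is. -/
lemma Tmap_mono_s (H : GoodParams c g δ a s₀) {p : ℝ → ℝ} (hp : InInt c a p)
    (hpm : MonotoneOn p (Set.Icc 0 1)) : MonotoneOn (Tmap c g δ p) (Set.Icc 0 1) := by
  intro s' hs' s hs hss
  rw [Tmap_eq c g δ p s]
  apply le_csInf (TS_nonempty p hs.1)
  rintro y ⟨k, t, hk, ht0, hts, rfl⟩
  have hk' : (1:ℝ) ≤ (k:ℝ) := by exact_mod_cast hk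
  have hkpos : (0:ℝ) < k := by linarith
  have hδ0 : (0:ℝ) < δ := lt_trans one_pos H.hδ
  rcases le_or_gt t s' with h | h
  · calc Tmap c g δ p s' ≤ c (s' - t) + g k + δ * k * p (t / k) :=
          Tmap_le_elt H (fun x hx => (hp x hx).1) hs' hk ht0 h
      _ ≤ c (s - t) + g k + δ * k * p (t / k) := by
          have := H.hcmono (Tsub_mem ht0 h hs') (Tsub_mem ht0 hts hs) (by linarith)
          linarith
  · calc Tmap c g δ p s' ≤ c (s' - s') + g k + δ * k * p (s' / k) :=
          Tmap_le_elt H (fun x hx => (hp x hx).1) hs' hk hs'.1 (le_refl s')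
      _ ≤ c (s - t) + g k + δ * k * p (t / k) := by
          have e1 : c (s' - s') = 0 := by simp [H.hc0]
          have e2 : 0 ≤ c (s - t) := c_nonneg H (Tsub_mem ht0 hts hs)
          have e3 : p (s' / k) ≤ p (t / k) := by
            apply hpm (Tdiv_mem hk hs'.1 (le_refl s') hs') (Tdiv_mem hk ht0 hts hs)
            gcongr
          have e4 : δ * k * p (s' / k) ≤ δ * k * p (t / k) := by
            apply mul_le_mul_of_nonneg_left e3; positivity
          linarith

/-- modulus bound: `Tmap p s ≤ Tmap p s' + (c 1 - c (1 - (s - s')))` for `s' ≤ s`. -/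
lemma Tmap_mod (H : GoodParams c g δ a s₀) {p : ℝ → ℝ} (hp : InInt c a p)
    {s' s : ℝ} (hs' : s' ∈ Set.Icc (0:ℝ) 1) (hs : s ∈ Set.Icc (0:ℝ) 1) (hss : s' ≤ s) :
    Tmap c g δ p s ≤ Tmap c g δ p s' + (c 1 - c (1 - (s - s'))) := by
  have key : Tmap c g δ p s - (c 1 - c (1 - (s - s'))) ≤ sInf (TS c g δ p s') := by
    apply le_csInf (TS_nonempty p hs'.1)
    rintro y ⟨k, t, hk, ht0, hts, rfl⟩
    have h1 : Tmap c g δ p s ≤ c (s - t) + g k + δ * k * p (t / k) :=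
      Tmap_le_elt H (fun x hx => (hp x hx).1) hs hk ht0 (le_trans hts hss)
    have h2 : c (s - t) - c (s' - t) ≤ c 1 - c (1 - ((s - t) - (s' - t))) :=
      H.hmod (s' - t) (s - t) (by linarith [hs'.1]) (by linarith) (by linarith [hs.2])
    have h3 : (1 : ℝ) - ((s - t) - (s' - t)) = 1 - (s - s') := by ring
    rw [h3] at h2
    linarith
  rw [Tmap_eq c g δ p s'] ; linarith

lemma Tmap_cont (H : GoodParams c g δ a s₀) {p : ℝ → ℝ} (hp : InInt c a p)
    (hpm : MonotoneOn p (Set.Icc 0 1)) : ContinuousOn (Tmap c g δ p) (Set.Icc 0 1) := by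
  rw [Metric.continuousOn_iff]
  intro b hb ε hε
  have h1 : ContinuousWithinAt c (Set.Icc 0 1) 1 := H.hccont 1 ⟨zero_le_one, le_refl 1⟩
  rw [Metric.continuousWithinAt_iff] at h1
  obtain ⟨η, hη, hcc⟩ := h1 ε hε
  refine ⟨min η 1, lt_min hη one_pos, ?_⟩
  have key : ∀ u v : ℝ, u ∈ Set.Icc (0:ℝ) 1 → v ∈ Set.Icc (0:ℝ) 1 → u ≤ v →
      v - u < min η 1 → dist (Tmap c g δ p v) (Tmap c g δ p u) < ε := by
    intro u v hu hv huv hd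
    have m1 : Tmap c g δ p u ≤ Tmap c g δ p v := Tmap_mono_s H hp hpm hu hv huv
    have m2 : Tmap c g δ p v ≤ Tmap c g δ p u + (c 1 - c (1 - (v - u))) :=
      Tmap_mod H hp hu hv huv
    have hw : (1 : ℝ) - (v - u) ∈ Set.Icc (0:ℝ) 1 := by
      constructor
      · have : v - u < 1 := lt_of_lt_of_le hd (min_le_right η 1)
        linarith
      · linarith
    have hcw : dist (c (1 - (v - u))) (c 1) < ε := by
      apply hcc hw
      rw [Real.dist_eq]
      rw [abs_of_nonpos (by linarith : (1:ℝ) - (v - u) - 1 ≤ 0)]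
      have : v - u < η := lt_of_lt_of_le hd (min_le_left η 1)
      linarith
    have hcle : c (1 - (v - u)) ≤ c 1 := H.hcmono hw ⟨zero_le_one, le_refl 1⟩ (by linarith)
    rw [Real.dist_eq] at hcw ⊢
    rw [abs_of_nonpos (by linarith : c (1 - (v - u)) - c 1 ≤ 0)] at hcw
    rw [abs_of_nonneg (by linarith : (0:ℝ) ≤ Tmap c g δ p v - Tmap c g δ p u)]
    linarith
  intro s hs hdist
  rw [Real.dist_eq] at hdist
  rcases le_total s b with h | h
  · have := key s b hs hb h (by rw [abs_of_nonpos (by linarith)] at hdist; linarith)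
    rw [dist_comm] at this
    exact this
  · exact key b s hb hs h (by rw [abs_of_nonneg (by linarith)] at hdist; linarith)

/-- Core comparison: if `p` is a subsolution-type fixed point and `q` a fixed point,
then `p ≤ q` on `[0,1]`. -/
lemma fixed_le (H : GoodParams c g δ a s₀) {p q : ℝ → ℝ} (hp : InInt c a p) (hq : InInt c a q)
    (hTp : ∀ s ∈ Set.Icc (0:ℝ) 1, Tmap c g δ p s = p s)
    (hTq : ∀ s ∈ Set.Icc (0:ℝ) 1, Tmap c g δ q s = q s) :
    ∀ s ∈ Set.Icc (0:ℝ) 1, p s ≤ q s := by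
  have hδ0 : (0:ℝ) < δ := lt_trans one_pos H.hδ
  have main : ∀ j : ℕ, ∀ s ∈ Set.Icc (0:ℝ) 1, q s < a * s₀ * δ ^ j → p s ≤ q s := by
    intro j
    induction j with
    | zero =>
      intro s hs hqs
      rw [pow_zero, mul_one] at hqs
      have h1 : a * s ≤ q s := (hq s hs).1
      have hss : s ≤ s₀ := by nlinarith [H.ha]
      have e1 : p s = c s := by rw [← hTp s hs]; exact Tmap_small H hp hs.1 hss
      have e2 : q s = c s := by rw [← hTq s hs]; exact Tmap_small H hq hs.1 hss
      rw [e1, e2]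
    | succ j ih =>
      intro s hs hqs
      have hpow : (0:ℝ) < a * s₀ * δ ^ j := mul_pos (mul_pos H.ha H.hs₀) (pow_pos hδ0 j)
      -- show ∀ ε > 0 small, p s ≤ q s + ε
      apply le_of_forall_pos_le_add
      intro ε hε
      set ε₁ := min ε (a * s₀ * δ ^ (j+1) - q s) with hε₁def
      have hε₁ : 0 < ε₁ := lt_min hε (by linarith)
      -- ε₁-optimal element for q
      have hlt : sInf (TS c g δ q s) < q s + ε₁ := by
        rw [← Tmap_eq, hTq s hs]; linarith
      obtain ⟨y, hymem, hy⟩ := exists_lt_of_csInf_lt (TS_nonempty q hs.1) hlt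
      obtain ⟨k, t, hk, ht0, hts, rfl⟩ := hymem
      have hk' : (1:ℝ) ≤ (k:ℝ) := by exact_mod_cast hk
      have hkpos : (0:ℝ) < k := by linarith
      have htk : t / (k:ℝ) ∈ Set.Icc (0:ℝ) 1 := Tdiv_mem hk ht0 hts hs
      have hcnn : 0 ≤ c (s - t) := c_nonneg H (Tsub_mem ht0 hts hs)
      have hgnn : 0 ≤ g k := H.hg0 k hk
      have hqnn : 0 ≤ q (t / k) := le_trans (mul_nonneg (le_of_lt H.ha) (div_nonneg ht0 (le_of_lt hkpos)) : (0:ℝ) ≤ a * (t/(k:ℝ))) (hq _ htk).1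
      -- leaf smallness
      have hylt : c (s - t) + g k + δ * k * q (t / k) < a * s₀ * δ ^ (j+1) := by
        have : q s + ε₁ ≤ a * s₀ * δ ^ (j+1) := by
          have := min_le_right ε (a * s₀ * δ ^ (j+1) - q s)
          have h2 : ε₁ ≤ a * s₀ * δ ^ (j+1) - q s := this
          linarith
        linarith
      have hleaf : q (t / k) < a * s₀ * δ ^ j := by
        have h1 : δ * k * q (t / k) < a * s₀ * δ ^ (j+1) := by linarith
        have h2 : a * s₀ * δ ^ (j+1) = δ * 1 * (a * s₀ * δ ^ j) := by ring
        by_contra hcon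
        push_neg at hcon
        have h3 : δ * 1 * (a * s₀ * δ ^ j) ≤ δ * k * q (t / k) := by
          have := mul_le_mul hk' hcon (le_of_lt hpow) (le_of_lt (by positivity : (0:ℝ) < (k:ℝ)))
          nlinarith
        linarith
      have hpq : p (t / k) ≤ q (t / k) := ih _ htk hleaf
      have h4 : p s ≤ c (s - t) + g k + δ * k * p (t / k) := by
        rw [← hTp s hs]
        exact Tmap_le_elt H (fun x hx => (hp x hx).1) hs hk ht0 hts
      have h5 : δ * k * p (t / k) ≤ δ * k * q (t / k) := by
        apply mul_le_mul_of_nonneg_left hpq; positivity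
      have h6 : ε₁ ≤ ε := min_le_left _ _
      linarith
  intro s hs
  obtain ⟨J, hJ⟩ := pow_unbounded_of_one_lt (c 1 / (a * s₀)) H.hδ
  apply main J s hs
  have h1 : q s ≤ c s := (hq s hs).2
  have h2 : c s ≤ c 1 := H.hcmono hs ⟨zero_le_one, le_refl 1⟩ hs.2
  have h3 : c 1 < a * s₀ * δ ^ J := by
    have hpos : (0:ℝ) < a * s₀ := mul_pos H.ha H.hs₀
    rw [div_lt_iff₀ hpos] at hJ
    linarith [hJ]
  linarith

lemma exists_fixed (H : GoodParams c g δ a s₀) :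
    ∃ pstar : ℝ → ℝ, ContinuousOn pstar (Set.Icc 0 1) ∧ InInt c a pstar ∧
      ∀ s ∈ Set.Icc (0:ℝ) 1, Tmap c g δ pstar s = pstar s := by
  classical
  have hδ0 : (0:ℝ) < δ := lt_trans one_pos H.hδ
  set v : ℕ → ℝ → ℝ := fun n => (Tmap c g δ)^[n] c with hvdef
  have hv0 : v 0 = c := rfl
  have hvs : ∀ n, v (n+1) = Tmap c g δ (v n) := fun n =>
    Function.iterate_succ_apply' (Tmap c g δ) n c
  have hI : ∀ n, InInt c a (v n) ∧ MonotoneOn (v n) (Set.Icc 0 1) ∧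
      ContinuousOn (v n) (Set.Icc 0 1) := by
    intro n
    induction n with
    | zero => exact ⟨fun x hx => ⟨H.hca x hx, le_refl _⟩, H.hcmono, H.hccont⟩
    | succ n ih =>
      rw [hvs n]
      exact ⟨InInt_Tmap H ih.1, Tmap_mono_s H ih.1 ih.2.1, Tmap_cont H ih.1 ih.2.1⟩
  have hdec : ∀ n, ∀ s ∈ Set.Icc (0:ℝ) 1, v (n+1) s ≤ v n s := by
    intro n
    induction n with
    | zero =>
      intro s hs
      rw [hvs 0]
      exact Tmap_le_c H (hI 0).1 hs
    | succ n ih =>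
      intro s hs
      rw [hvs (n+1)]
      calc Tmap c g δ (v (n+1)) s ≤ Tmap c g δ (v n) s :=
            Tmap_mono_p H (fun x hx => ((hI (n+1)).1 x hx).1) ih hs
        _ = v (n+1) s := (congrFun (hvs n) s).symm
  set pbar : ℝ → ℝ := fun s => ⨅ n, v n s with hpbardef
  have hbdd : ∀ s ∈ Set.Icc (0:ℝ) 1, BddBelow (Set.range fun n => v n s) := by
    intro s hs
    exact ⟨a * s, by rintro y ⟨n, rfl⟩; exact ((hI n).1 s hs).1⟩
  have hple : ∀ n, ∀ s ∈ Set.Icc (0:ℝ) 1, pbar s ≤ v n s := fun n s hs =>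
    ciInf_le (hbdd s hs) n
  have hlbp : ∀ s ∈ Set.Icc (0:ℝ) 1, a * s ≤ pbar s := fun s hs =>
    le_ciInf (fun n => ((hI n).1 s hs).1)
  have hpbarI : InInt c a pbar := fun s hs => ⟨hlbp s hs, hple 0 s hs⟩
  have hTfix : ∀ s ∈ Set.Icc (0:ℝ) 1, Tmap c g δ pbar s = pbar s := by
    intro s hs
    apply le_antisymm
    · apply le_ciInf
      intro n
      cases n with
      | zero => exact Tmap_le_c H hpbarI hs
      | succ n =>
        rw [hvs n]
        exact Tmap_mono_p H (fun x hx => (hpbarI x hx).1) (fun x hx => hple n x hx) hs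
    · rw [Tmap_eq]
      apply le_csInf (TS_nonempty pbar hs.1)
      rintro y ⟨k, t, hk, ht0, hts, rfl⟩
      have hk' : (1:ℝ) ≤ (k:ℝ) := by exact_mod_cast hk
      have hkpos : (0:ℝ) < k := by linarith
      apply le_of_forall_pos_le_add
      intro ε hε
      have hε₂ : 0 < ε / (δ * k) := by positivity
      have htk : t / (k:ℝ) ∈ Set.Icc (0:ℝ) 1 := Tdiv_mem hk ht0 hts hs
      have hlt : (⨅ n, v n (t / k)) < pbar (t / k) + ε / (δ * k) := by
        have : pbar (t / k) = ⨅ n, v n (t / k) := rfl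
        rw [← this]
        linarith
      obtain ⟨n, hn⟩ := exists_lt_of_ciInf_lt hlt
      have h1 : pbar s ≤ v (n+1) s := hple (n+1) s hs
      have h2 : v (n+1) s ≤ c (s - t) + g k + δ * k * v n (t / k) := by
        rw [hvs n]
        exact Tmap_le_elt H (fun x hx => ((hI n).1 x hx).1) hs hk ht0 hts
      have h3 : δ * k * v n (t / k) ≤ δ * k * (pbar (t / k) + ε / (δ * k)) := by
        apply mul_le_mul_of_nonneg_left (le_of_lt hn)
        positivity
      have h4 : δ * k * (pbar (t / k) + ε / (δ * k)) = δ * k * pbar (t / k) + ε := by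
        field_simp
      linarith
  -- stabilization after finitely many steps
  have stab : ∀ j : ℕ, ∀ s ∈ Set.Icc (0:ℝ) 1, pbar s < a * s₀ * δ ^ j →
      v (j+1) s ≤ pbar s := by
    intro j
    induction j with
    | zero =>
      intro s hs hps
      rw [pow_zero, mul_one] at hps
      have h1 : a * s ≤ pbar s := hlbp s hs
      have hss : s ≤ s₀ := by nlinarith [H.ha]
      have e1 : v 1 s = c s := by
        rw [hvs 0]
        exact Tmap_small H (hI 0).1 hs.1 hss
      have e2 : pbar s = c s := by
        rw [← hTfix s hs]
        exact Tmap_small H hpbarI hs.1 hss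
      rw [e1, e2]
    | succ j ih =>
      intro s hs hps
      have hpow : (0:ℝ) < a * s₀ * δ ^ j := mul_pos (mul_pos H.ha H.hs₀) (pow_pos hδ0 j)
      apply le_of_forall_pos_le_add
      intro ε hε
      set ε₁ := min ε (a * s₀ * δ ^ (j+1) - pbar s) with hε₁def
      have hε₁ : 0 < ε₁ := lt_min hε (by linarith)
      have hlt : sInf (TS c g δ pbar s) < pbar s + ε₁ := by
        rw [← Tmap_eq, hTfix s hs]; linarith
      obtain ⟨y, hymem, hy⟩ := exists_lt_of_csInf_lt (TS_nonempty pbar hs.1) hlt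
      obtain ⟨k, t, hk, ht0, hts, rfl⟩ := hymem
      have hk' : (1:ℝ) ≤ (k:ℝ) := by exact_mod_cast hk
      have hkpos : (0:ℝ) < k := by linarith
      have htk : t / (k:ℝ) ∈ Set.Icc (0:ℝ) 1 := Tdiv_mem hk ht0 hts hs
      have hcnn : 0 ≤ c (s - t) := c_nonneg H (Tsub_mem ht0 hts hs)
      have hgnn : 0 ≤ g k := H.hg0 k hk
      have hqnn : 0 ≤ pbar (t / k) :=
        le_trans (mul_nonneg (le_of_lt H.ha) (div_nonneg ht0 (le_of_lt hkpos))) (hlbp _ htk)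
      have hylt : c (s - t) + g k + δ * k * pbar (t / k) < a * s₀ * δ ^ (j+1) := by
        have h2 : ε₁ ≤ a * s₀ * δ ^ (j+1) - pbar s := min_le_right _ _
        linarith
      have hleaf : pbar (t / k) < a * s₀ * δ ^ j := by
        have h1 : δ * k * pbar (t / k) < a * s₀ * δ ^ (j+1) := by linarith
        have h2 : a * s₀ * δ ^ (j+1) = δ * 1 * (a * s₀ * δ ^ j) := by ring
        by_contra hcon
        push_neg at hcon
        have h3 : δ * 1 * (a * s₀ * δ ^ j) ≤ δ * k * pbar (t / k) := by
          have := mul_le_mul hk' hcon (le_of_lt hpow) (le_of_lt (by positivity : (0:ℝ) < (k:ℝ)))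
          nlinarith
        linarith
      have hpq : v (j+1) (t / k) ≤ pbar (t / k) := ih _ htk hleaf
      have h4 : v (j+2) s ≤ c (s - t) + g k + δ * k * v (j+1) (t / k) := by
        rw [hvs (j+1)]
        exact Tmap_le_elt H (fun x hx => ((hI (j+1)).1 x hx).1) hs hk ht0 hts
      have h5 : δ * k * v (j+1) (t / k) ≤ δ * k * pbar (t / k) := by
        apply mul_le_mul_of_nonneg_left hpq; positivity
      have h6 : ε₁ ≤ ε := min_le_left _ _
      linarith
  obtain ⟨J, hJ⟩ := pow_unbounded_of_one_lt (c 1 / (a * s₀)) H.hδ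
  have h3 : c 1 < a * s₀ * δ ^ J := by
    have hpos : (0:ℝ) < a * s₀ := mul_pos H.ha H.hs₀
    rw [div_lt_iff₀ hpos] at hJ
    linarith
  have heq : ∀ s ∈ Set.Icc (0:ℝ) 1, v (J+1) s = pbar s := by
    intro s hs
    apply le_antisymm
    · apply stab J s hs
      have h1 : pbar s ≤ c s := hple 0 s hs
      have h2 : c s ≤ c 1 := H.hcmono hs ⟨zero_le_one, le_refl 1⟩ hs.2
      linarith
    · exact hple (J+1) s hs
  refine ⟨v (J+1), (hI (J+1)).2.2, (hI (J+1)).1, ?_⟩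
  intro s hs
  calc Tmap c g δ (v (J+1)) s = Tmap c g δ pbar s := Tmap_congr heq hs
    _ = pbar s := hTfix s hs
    _ = v (J+1) s := (heq s hs).symm

theorem unique_equilibrium_price (c : ℝ → ℝ) (g : ℕ → ℝ) (δ : ℝ)
(hc_diff : DifferentiableOn ℝ c (Set.Icc 0 1))
    (hc_mono : StrictMonoOn c (Set.Icc 0 1))
    (hc_conv : StrictConvexOn ℝ (Set.Icc 0 1) c)
    (hc0 : c 0 = 0) (hc'0 : 0 < deriv c 0)
    (hg_mono : StrictMonoOn g {k : ℕ | 1 ≤ k})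
    (hg1 : g 1 = 0) (hg_nonneg : ∀ k : ℕ, 1 ≤ k → 0 ≤ g k)
    (hg_top : Tendsto g atTop atTop)
    (hδ : 1 < δ) :
    ∃ pstar : ℝ → ℝ,
      ContinuousOn pstar (Set.Icc 0 1) ∧
      (∀ s ∈ Set.Icc (0 : ℝ) 1, deriv c 0 * s ≤ pstar s ∧ pstar s ≤ c s) ∧
      (∀ s ∈ Set.Icc (0 : ℝ) 1, Tmap c g δ pstar s = pstar s) ∧
      (∀ q : ℝ → ℝ, ContinuousOn q (Set.Icc 0 1) →
        (∀ s ∈ Set.Icc (0 : ℝ) 1, deriv c 0 * s ≤ q s ∧ q s ≤ c s) →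
        (∀ s ∈ Set.Icc (0 : ℝ) 1, Tmap c g δ q s = q s) →
        Set.EqOn q pstar (Set.Icc 0 1)) := by
  set a := deriv c 0 with hadef
  have ha : 0 < a := hc'0
  have hdiff : DifferentiableAt ℝ c 0 := by
    by_contra h
    rw [hadef, deriv_zero_of_not_differentiableAt h] at ha
    exact lt_irrefl 0 ha
  have hder : HasDerivAt c a 0 := hdiff.hasDerivAt
  have hslope := hasDerivAt_iff_tendsto_slope.mp hder
  have hconv : ConvexOn ℝ (Set.Icc 0 1) c := hc_conv.convexOn
  have hmono : MonotoneOn c (Set.Icc 0 1) := hc_mono.monotoneOn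
  have hcont : ContinuousOn c (Set.Icc 0 1) := hc_diff.continuousOn
  -- secant monotonicity for pairs of intervals
  have pairs : ∀ x1 x2 y1 y2 : ℝ, x1 ∈ Set.Icc (0:ℝ) 1 → x2 ∈ Set.Icc (0:ℝ) 1 →
      y1 ∈ Set.Icc (0:ℝ) 1 → y2 ∈ Set.Icc (0:ℝ) 1 → x1 < y1 → x2 < y2 → x1 ≤ x2 → y1 ≤ y2 →
      (c y1 - c x1) / (y1 - x1) ≤ (c y2 - c x2) / (y2 - x2) := by
    intro x1 x2 y1 y2 hx1 hx2 hy1 hy2 h1 h2 hx hy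
    have s1 : (c y1 - c x1) / (y1 - x1) ≤ (c y2 - c x1) / (y2 - x1) :=
      hconv.secant_mono hx1 hy1 hy2 (ne_of_gt h1) (ne_of_gt (lt_of_lt_of_le h1 hy)) hy
    have s2' : (c x1 - c y2) / (x1 - y2) ≤ (c x2 - c y2) / (x2 - y2) :=
      hconv.secant_mono hy2 hx1 hx2 (ne_of_lt (lt_of_lt_of_le h1 hy)) (ne_of_lt h2) hx
    have e1 : (c x1 - c y2) / (x1 - y2) = (c y2 - c x1) / (y2 - x1) := by
      rw [← neg_div_neg_eq]; ring_nf
    have e2 : (c x2 - c y2) / (x2 - y2) = (c y2 - c x2) / (y2 - x2) := by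
      rw [← neg_div_neg_eq]; ring_nf
    rw [e1, e2] at s2'
    linarith
  -- slope at zero from the right
  have T1 : Tendsto (fun x => c x / x) (𝓝[>] (0:ℝ)) (𝓝 a) := by
    have hsub : 𝓝[>] (0:ℝ) ≤ 𝓝[≠] (0:ℝ) :=
      nhdsWithin_mono 0 (fun x hx => ne_of_gt hx)
    apply (hslope.mono_left hsub).congr'
    filter_upwards [self_mem_nhdsWithin] with x hx
    have : slope c 0 x = (c x - c 0) / (x - 0) := slope_def_field c 0 x
    rw [this, hc0]
    ring_nf
  have hca : ∀ x ∈ Set.Icc (0:ℝ) 1, a * x ≤ c x := by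
    intro x hx
    rcases eq_or_lt_of_le hx.1 with h | h
    · rw [← h]; simp [hc0]
    · have key : a ≤ c x / x := by
        apply le_of_tendsto T1
        filter_upwards [Ioc_mem_nhdsGT_of_mem ⟨le_refl (0:ℝ), h⟩] with y hy
        have := pairs 0 0 y x ⟨le_refl 0, zero_le_one⟩ ⟨le_refl 0, zero_le_one⟩
          ⟨le_of_lt hy.1, le_trans hy.2 hx.2⟩ hx hy.1 h (le_refl 0) hy.2
        simpa [hc0] using this
      calc a * x ≤ (c x / x) * x := by
            apply mul_le_mul_of_nonneg_right key (le_of_lt h)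
        _ = c x := by field_simp
  -- construction of s₀
  have T2 : Tendsto (fun h => (c (2*h) - c h) / h) (𝓝[>] (0:ℝ)) (𝓝 a) := by
    have hmap : Tendsto (fun h : ℝ => 2 * h) (𝓝[>] (0:ℝ)) (𝓝[>] (0:ℝ)) := by
      rw [tendsto_nhdsWithin_iff]
      constructor
      · have h1 : Tendsto (fun h : ℝ => 2 * h) (𝓝 0) (𝓝 (2 * 0)) :=
          (continuous_const.mul continuous_id).tendsto 0
        rw [mul_zero] at h1
        exact h1.mono_left nhdsWithin_le_nhds
      · filter_upwards [self_mem_nhdsWithin] with x hx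
        have : (0:ℝ) < x := hx
        have : (0:ℝ) < 2 * x := by linarith
        exact this
    have Tdouble : Tendsto (fun h : ℝ => c (2*h) / (2*h)) (𝓝[>] (0:ℝ)) (𝓝 a) :=
      T1.comp hmap
    have heq : (fun h : ℝ => 2 * (c (2*h) / (2*h)) - c h / h)
        =ᶠ[𝓝[>] (0:ℝ)] (fun h => (c (2*h) - c h) / h) := by
      filter_upwards [self_mem_nhdsWithin] with h hh
      have hh' : (0:ℝ) < h := hh
      field_simp
    have T3 : Tendsto (fun h : ℝ => 2 * (c (2*h) / (2*h)) - c h / h) (𝓝[>] (0:ℝ))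
        (𝓝 (2 * a - a)) := (Tdouble.const_mul 2).sub T1
    have : (2 : ℝ) * a - a = a := by ring
    rw [this] at T3
    exact T3.congr' heq
  have hδa : a < δ * a := by nlinarith
  have hev : ∀ᶠ h in 𝓝[>] (0:ℝ), (c (2*h) - c h) / h < δ * a :=
    T2.eventually (gt_mem_nhds hδa)
  have hev2 : ∀ᶠ h in 𝓝[>] (0:ℝ), h < 1/2 :=
    eventually_nhdsWithin_of_eventually_nhds (gt_mem_nhds (by norm_num : (0:ℝ) < 1/2))
  obtain ⟨s₀, h₁, h₃⟩ := ((hev.and hev2).and self_mem_nhdsWithin).exists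
  have hs₀pos : (0:ℝ) < s₀ := h₃
  have hs₀half : s₀ < 1/2 := h₁.2
  have hs₀slope : (c (2*s₀) - c s₀) / s₀ < δ * a := h₁.1
  have hs₀1 : s₀ ≤ 1 := by linarith
  have hs₀mem : s₀ ∈ Set.Icc (0:ℝ) 1 := ⟨le_of_lt hs₀pos, hs₀1⟩
  have h2s₀mem : 2 * s₀ ∈ Set.Icc (0:ℝ) 1 := ⟨by linarith, by linarith⟩
  -- slope bound on [0, s₀]
  have hslope₀ : ∀ u v : ℝ, 0 ≤ u → u ≤ v → v ≤ s₀ → c v - c u ≤ δ * a * (v - u) := by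
    intro u v h0 huv hvs
    rcases eq_or_lt_of_le huv with h | h
    · rw [h]; simp
    · have hp := pairs u s₀ v (2*s₀) ⟨h0, by linarith⟩ hs₀mem ⟨by linarith, by linarith⟩
        h2s₀mem h (by linarith) (by linarith) (by linarith)
      have e : (2:ℝ) * s₀ - s₀ = s₀ := by ring
      rw [e] at hp
      have hlt : (c v - c u) / (v - u) < δ * a := lt_of_le_of_lt hp hs₀slope
      have hd : (0:ℝ) < v - u := by linarith
      calc c v - c u = ((c v - c u) / (v - u)) * (v - u) := by field_simp
        _ ≤ (δ * a) * (v - u) := mul_le_mul_of_nonneg_right (le_of_lt hlt) (le_of_lt hd)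
  -- modulus bound
  have hmod : ∀ u v : ℝ, 0 ≤ u → u ≤ v → v ≤ 1 → c v - c u ≤ c 1 - c (1 - (v - u)) := by
    intro u v h0 huv hv1
    rcases eq_or_lt_of_le huv with h | h
    · rw [h]; simp
    · have hp := pairs u (1 - (v - u)) v 1 ⟨h0, by linarith⟩ ⟨by linarith, by linarith⟩
        ⟨by linarith, hv1⟩ ⟨zero_le_one, le_refl 1⟩ h (by linarith) (by linarith) hv1
      have e : (1:ℝ) - (1 - (v - u)) = v - u := by ring
      rw [e] at hp
      have hd : (0:ℝ) < v - u := by linarith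
      calc c v - c u = ((c v - c u) / (v - u)) * (v - u) := by field_simp
        _ ≤ ((c 1 - c (1 - (v - u))) / (v - u)) * (v - u) :=
            mul_le_mul_of_nonneg_right hp (le_of_lt hd)
        _ = c 1 - c (1 - (v - u)) := by field_simp
  have H : GoodParams c g δ a s₀ :=
    ⟨ha, hδ, hc0, hmono, hcont, hca, hg1, hg_nonneg, hs₀pos, hs₀1, hslope₀, hmod⟩
  obtain ⟨pstar, hpc, hpI, hpfix⟩ := exists_fixed H
  refine ⟨pstar, hpc, hpI, hpfix, ?_⟩
  intro q hqc hqI hqfix s hs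
  exact le_antisymm (fixed_le H hqI hpI hqfix hpfix s hs)
    (fixed_le H hpI hqI hpfix hqfix s hs)
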